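/- arXiv:2304.05009 — 4 statements merged into one kernel-verified Lean document; each statement's English description precedes it below -/
import Mathlib

section
/- Let ℓ be a positive integer and a an integer. Let P(x) = a_0 + a_1 x + … + a_d x^d ∈ 𝔽_q[T][x] with deg_x P = d and coefficients satisfying |a_j| ≤ q^{(d − j + a)ℓ} for 0 ≤ j ≤ d. If P = P_1·P_2 for some P_1, P_2 ∈ 𝔽_q[T][x], then writing P_1(x) = b_0 + b_1 x + … + b_e x^e with e = deg_x P_1 ≤ d, the coefficients satisfy |b_j| ≤ q^{(e − j + a)ℓ} for 0 ≤ j ≤ e. -/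
open Polynomial

section GaussNorm

variable {K : Type} [Field K]

/-- weighted degree of the `j`-th coefficient -/
noncomputable def wfun (ℓ : ℕ) (F : Polynomial (Polynomial K)) (j : ℕ) : ℕ :=
  (F.coeff j).natDegree + j * ℓ

/-- the weighted Gauss norm (as an exponent) -/
noncomputable def Wt (ℓ : ℕ) (F : Polynomial (Polynomial K)) : ℕ :=
  F.support.sup (wfun ℓ F)

lemma le_Wt {ℓ : ℕ} {F : Polynomial (Polynomial K)} {j : ℕ} (hj : F.coeff j ≠ 0) :
    (F.coeff j).natDegree + j * ℓ ≤ Wt ℓ F :=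
  Finset.le_sup (f := wfun ℓ F) (Polynomial.mem_support_iff.2 hj)

lemma Wt_mul (ℓ : ℕ) {F G : Polynomial (Polynomial K)} (hF : F ≠ 0) (hG : G ≠ 0) :
    Wt ℓ (F * G) = Wt ℓ F + Wt ℓ G := by
  apply le_antisymm
  · apply Finset.sup_le
    intro n hn
    have hcn : (F * G).coeff n ≠ 0 := Polynomial.mem_support_iff.1 hn
    have key : ∀ m : ℕ, ((F * G).coeff n).coeff m ≠ 0 → m + n * ℓ ≤ Wt ℓ F + Wt ℓ G := by
      intro m hm
      rw [Polynomial.coeff_mul, Polynomial.finset_sum_coeff] at hm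
      obtain ⟨p, hp, hpm⟩ := Finset.exists_ne_zero_of_sum_ne_zero hm
      have h1 : F.coeff p.1 ≠ 0 := by intro h; simp [h] at hpm
      have h2 : G.coeff p.2 ≠ 0 := by intro h; simp [h] at hpm
      have hm' : m ≤ (F.coeff p.1).natDegree + (G.coeff p.2).natDegree :=
        le_trans (Polynomial.le_natDegree_of_ne_zero hpm) Polynomial.natDegree_mul_le
      have hA := le_Wt (ℓ := ℓ) h1
      have hB := le_Wt (ℓ := ℓ) h2
      have hpn : p.1 + p.2 = n := Finset.HasAntidiagonal.mem_antidiagonal.1 hp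
      have hmul : n * ℓ = p.1 * ℓ + p.2 * ℓ := by rw [← hpn, add_mul]
      linarith
    exact key _ (Polynomial.leadingCoeff_ne_zero.mpr hcn)
  · -- hard direction
    have hFs : F.support.Nonempty := Polynomial.support_nonempty.2 hF
    have hGs : G.support.Nonempty := Polynomial.support_nonempty.2 hG
    obtain ⟨i₀, hi₀, hWF⟩ := Finset.exists_mem_eq_sup F.support hFs (wfun ℓ F)
    obtain ⟨i₀', hi₀', hWG⟩ := Finset.exists_mem_eq_sup G.support hGs (wfun ℓ G)
    set SF := F.support.filter (fun j => wfun ℓ F j = Wt ℓ F) with hSF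
    set SG := G.support.filter (fun j => wfun ℓ G j = Wt ℓ G) with hSG
    have hSFne : SF.Nonempty := ⟨i₀, Finset.mem_filter.2 ⟨hi₀, hWF.symm⟩⟩
    have hSGne : SG.Nonempty := ⟨i₀', Finset.mem_filter.2 ⟨hi₀', hWG.symm⟩⟩
    set i := SF.min' hSFne with hi
    set i' := SG.min' hSGne with hi'
    have hiS : i ∈ SF := Finset.min'_mem _ _
    have hi'S : i' ∈ SG := Finset.min'_mem _ _
    have hisup : i ∈ F.support := (Finset.mem_filter.1 hiS).1
    have hi'sup : i' ∈ G.support := (Finset.mem_filter.1 hi'S).1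
    have hFi : F.coeff i ≠ 0 := Polynomial.mem_support_iff.1 hisup
    have hGi' : G.coeff i' ≠ 0 := Polynomial.mem_support_iff.1 hi'sup
    have hWFi : wfun ℓ F i = Wt ℓ F := (Finset.mem_filter.1 hiS).2
    have hWGi' : wfun ℓ G i' = Wt ℓ G := (Finset.mem_filter.1 hi'S).2
    have hstrictF : ∀ k, k < i → F.coeff k ≠ 0 → wfun ℓ F k < Wt ℓ F := by
      intro k hk hk0
      have hle : wfun ℓ F k ≤ Wt ℓ F := Finset.le_sup (Polynomial.mem_support_iff.2 hk0)
      rcases eq_or_lt_of_le hle with heq | hlt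
      · exfalso
        have : k ∈ SF := Finset.mem_filter.2 ⟨Polynomial.mem_support_iff.2 hk0, heq⟩
        exact absurd (Finset.min'_le _ _ this) (not_le.2 hk)
      · exact hlt
    have hstrictG : ∀ k, k < i' → G.coeff k ≠ 0 → wfun ℓ G k < Wt ℓ G := by
      intro k hk hk0
      have hle : wfun ℓ G k ≤ Wt ℓ G := Finset.le_sup (Polynomial.mem_support_iff.2 hk0)
      rcases eq_or_lt_of_le hle with heq | hlt
      · exfalso
        have : k ∈ SG := Finset.mem_filter.2 ⟨Polynomial.mem_support_iff.2 hk0, heq⟩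
        exact absurd (Finset.min'_le _ _ this) (not_le.2 hk)
      · exact hlt
    set N := (F.coeff i).natDegree + (G.coeff i').natDegree with hN
    have claim : ((F * G).coeff (i + i')).coeff N
        = (F.coeff i).leadingCoeff * (G.coeff i').leadingCoeff := by
      rw [Polynomial.coeff_mul, Polynomial.finset_sum_coeff]
      rw [Finset.sum_eq_single (i, i')]
      · exact Polynomial.coeff_mul_degree_add_degree _ _
      · intro p hp hne
        by_cases h1 : F.coeff p.1 = 0
        · simp [h1]
        by_cases h2 : G.coeff p.2 = 0
        · simp [h2]
        apply Polynomial.coeff_eq_zero_of_natDegree_lt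
        refine lt_of_le_of_lt Polynomial.natDegree_mul_le ?_
        have hpn : p.1 + p.2 = i + i' := Finset.HasAntidiagonal.mem_antidiagonal.1 hp
        have hne1 : p.1 ≠ i := by
          intro h
          apply hne
          have : p.2 = i' := by omega
          exact Prod.ext h this
        have hmul : p.1 * ℓ + p.2 * ℓ = i * ℓ + i' * ℓ := by
          rw [← add_mul, ← add_mul, hpn]
        rcases lt_or_gt_of_ne hne1 with h | h
        · have hs := hstrictF p.1 h h1
          have hB : wfun ℓ G p.2 ≤ Wt ℓ G := Finset.le_sup (Polynomial.mem_support_iff.2 h2)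
          simp only [wfun] at hs hB hWFi hWGi'
          simp only [hN]
          linarith
        · have h2' : p.2 < i' := by omega
          have hs := hstrictG p.2 h2' h2
          have hA : wfun ℓ F p.1 ≤ Wt ℓ F := Finset.le_sup (Polynomial.mem_support_iff.2 h1)
          simp only [wfun] at hs hA hWFi hWGi'
          simp only [hN]
          linarith
      · intro h
        exact absurd (by simp : (i, i') ∈ Finset.HasAntidiagonal.antidiagonal (i + i')) h
    have hne0 : ((F * G).coeff (i + i')).coeff N ≠ 0 := by
      rw [claim]
      exact mul_ne_zero (Polynomial.leadingCoeff_ne_zero.2 hFi)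
        (Polynomial.leadingCoeff_ne_zero.2 hGi')
    have hcoeffne : (F * G).coeff (i + i') ≠ 0 := by
      intro h; rw [h] at hne0; simp at hne0
    have hdegge : N ≤ ((F * G).coeff (i + i')).natDegree :=
      Polynomial.le_natDegree_of_ne_zero hne0
    have hle : wfun ℓ (F * G) (i + i') ≤ Wt ℓ (F * G) :=
      Finset.le_sup (Polynomial.mem_support_iff.2 hcoeffne)
    have hmul : (i + i') * ℓ = i * ℓ + i' * ℓ := add_mul _ _ _
    simp only [wfun] at hle
    simp only [wfun] at hWFi hWGi'
    simp only [hN] at hdegge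
    linarith

end GaussNorm

open Classical in
/-- The absolute value on `𝔽_q[T]`: `|x| = q^(deg x)` for `x ≠ 0`, and `|0| = 0`. -/
noncomputable def pabs (q : ℕ) {Fq : Type} [Field Fq] (x : Polynomial Fq) : ℝ :=
  if x = 0 then 0 else (q : ℝ) ^ x.natDegree

/-- Lemma 3.2 (coefficient bounds pass to factors): let `ℓ` be a positive integer and
`a` an integer.  If `P ∈ 𝔽_q[T][x]` is nonzero of degree `d` in `x` with
`|coeff j P| ≤ q^{(d−j+a)ℓ}` for all `0 ≤ j ≤ d`, and `P = P₁·P₂`, then with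
`e = deg_x P₁` one has `|coeff j P₁| ≤ q^{(e−j+a)ℓ}` for all `0 ≤ j ≤ e`. -/
theorem factor_coefficient_bound
    (q : ℕ) (Fq : Type) [Field Fq] [Fintype Fq] (hq : Fintype.card Fq = q)
    (ℓ : ℕ) (hℓ : 0 < ℓ) (a : ℤ)
    (P P₁ P₂ : Polynomial (Polynomial Fq)) (hP0 : P ≠ 0)
    (d : ℕ) (hd : P.natDegree = d)
    (hcoeff : ∀ j : ℕ, j ≤ d →
      pabs q (P.coeff j) ≤ (q : ℝ) ^ (((d : ℝ) - (j : ℝ) + (a : ℝ)) * (ℓ : ℝ)))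
    (hfac : P = P₁ * P₂) :
    ∀ j : ℕ, j ≤ P₁.natDegree →
      pabs q (P₁.coeff j)
        ≤ (q : ℝ) ^ (((P₁.natDegree : ℝ) - (j : ℝ) + (a : ℝ)) * (ℓ : ℝ)) := by
  have hq1 : 1 < q := by
    rw [← hq]; exact Fintype.one_lt_card
  have hq1' : (1 : ℝ) < (q : ℝ) := by exact_mod_cast hq1
  have hq0 : (0 : ℝ) < (q : ℝ) := by linarith
  have hP1 : P₁ ≠ 0 := by rintro rfl; simp at hfac; exact hP0 hfac
  have hP2 : P₂ ≠ 0 := by rintro rfl; simp at hfac; exact hP0 hfac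
  set e := P₁.natDegree with he
  set e₂ := P₂.natDegree with he₂
  have hdeg : e + e₂ = d := by
    rw [← hd, hfac, Polynomial.natDegree_mul hP1 hP2]
  -- bound on Wt of P
  have hWP : (Wt ℓ P : ℤ) ≤ ((d : ℤ) + a) * ℓ := by
    have : ∀ j ∈ P.support, ((wfun ℓ P j : ℤ)) ≤ ((d : ℤ) + a) * ℓ := by
      intro j hj
      have hj0 : P.coeff j ≠ 0 := Polynomial.mem_support_iff.1 hj
      have hjd : j ≤ d := hd ▸ Polynomial.le_natDegree_of_ne_zero hj0
      have hb := hcoeff j hjd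
      rw [pabs, if_neg hj0] at hb
      rw [← Real.rpow_natCast (q : ℝ) (P.coeff j).natDegree] at hb
      have hble : ((P.coeff j).natDegree : ℝ) ≤ ((d : ℝ) - j + a) * ℓ :=
        (Real.rpow_le_rpow_left_iff hq1').1 hb
      have : (((P.coeff j).natDegree : ℝ)) + (j : ℝ) * ℓ ≤ ((d : ℝ) + a) * ℓ := by
        ring_nf at hble ⊢
        linarith
      have hz : (((P.coeff j).natDegree : ℤ)) + (j : ℤ) * ℓ ≤ ((d : ℤ) + a) * ℓ := by
        exact_mod_cast this
      simp only [wfun]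
      push_cast
      linarith
    -- transfer sup bound
    have hne : P.support.Nonempty := Polynomial.support_nonempty.2 hP0
    obtain ⟨j₀, hj₀, hWj₀⟩ := Finset.exists_mem_eq_sup P.support hne (wfun ℓ P)
    rw [Wt, hWj₀]
    exact this j₀ hj₀
  -- lower bound on Wt of P₂
  have hWP2 : ((e₂ : ℤ)) * ℓ ≤ (Wt ℓ P₂ : ℤ) := by
    have h2 : P₂.coeff e₂ ≠ 0 := by
      simpa [he₂] using Polynomial.leadingCoeff_ne_zero.2 hP2
    have := le_Wt (ℓ := ℓ) h2
    push_cast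
    exact_mod_cast le_trans (Nat.le_add_left _ _) this
  -- multiplicativity
  have hmul : Wt ℓ P = Wt ℓ P₁ + Wt ℓ P₂ := by
    rw [hfac]; exact Wt_mul ℓ hP1 hP2
  have hWP1 : (Wt ℓ P₁ : ℤ) ≤ ((e : ℤ) + a) * ℓ := by
    have hexp : ((d : ℤ) + a) * ℓ = ((e : ℤ) + a) * ℓ + (e₂ : ℤ) * ℓ := by
      have : (d : ℤ) = (e : ℤ) + (e₂ : ℤ) := by exact_mod_cast hdeg.symm
      rw [this]; ring
    have hcast : (Wt ℓ P : ℤ) = (Wt ℓ P₁ : ℤ) + (Wt ℓ P₂ : ℤ) := by exact_mod_cast hmul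
    linarith
  -- conclude
  intro j hj
  by_cases hj0 : P₁.coeff j = 0
  · rw [pabs, if_pos hj0]
    exact le_of_lt (Real.rpow_pos_of_pos hq0 _)
  · rw [pabs, if_neg hj0]
    rw [← Real.rpow_natCast (q : ℝ) (P₁.coeff j).natDegree]
    rw [Real.rpow_le_rpow_left_iff hq1']
    have hle := le_Wt (ℓ := ℓ) hj0
    have hlez : ((P₁.coeff j).natDegree : ℤ) + (j : ℤ) * ℓ ≤ ((e : ℤ) + a) * ℓ := by
      calc ((P₁.coeff j).natDegree : ℤ) + (j : ℤ) * ℓ ≤ (Wt ℓ P₁ : ℤ) := by exact_mod_cast hle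
        _ ≤ ((e : ℤ) + a) * ℓ := hWP1
    have hr : ((P₁.coeff j).natDegree : ℝ) + (j : ℝ) * ℓ ≤ ((e : ℝ) + a) * ℓ := by
      exact_mod_cast hlez
    ring_nf at hr ⊢
    linarith
end

section
/- Let d, e ≥ 2 be integers and ℓ, a, b real numbers. Let P(x) = a_0 + a_1 x + … + a_{e−1} x^{e−1} and Q(x) = b_0 + b_1 x + … + b_{d−1} x^{d−1} in 𝔽_q[T][x] (with formal degrees e−1 and d−1; leading coefficients may vanish) satisfy |a_j| ≤ q^{(e − j + a)ℓ} for 0 ≤ j ≤ e−1 and |b_j| ≤ q^{(d − j + b)ℓ} for 0 ≤ j ≤ d−1. Then |Res(P,Q)| ≤ q^{((e+a)(d+b) − (a+1)(b+1))ℓ}. -/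
/-- The `(d+e−2) × (d+e−2)` Sylvester matrix of `P(x) = a₀ + … + a_{e−1}x^{e−1}` and
`Q(x) = b₀ + … + b_{d−1}x^{d−1}` (taken with formal degrees `e−1` and `d−1`): the first
`d−1` rows are the successive shifts of `(a_{e−1}, …, a₁, a₀)` and the last `e−1` rows
are the successive shifts of `(b_{d−1}, …, b₁, b₀)`. -/
noncomputable def sylvester {Fq : Type} [Field Fq] (d e : ℕ) (a b : ℕ → Polynomial Fq) :
    Matrix (Fin (d + e - 2)) (Fin (d + e - 2)) (Polynomial Fq) :=
  Matrix.of fun i j : Fin (d + e - 2) =>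
    if (i : ℕ) < d - 1 then
      (if (i : ℕ) ≤ (j : ℕ) ∧ (j : ℕ) ≤ (i : ℕ) + (e - 1) then
        a (e - 1 - ((j : ℕ) - (i : ℕ))) else 0)
    else
      (if (i : ℕ) - (d - 1) ≤ (j : ℕ) ∧ (j : ℕ) ≤ ((i : ℕ) - (d - 1)) + (d - 1) then
        b (d - 1 - ((j : ℕ) - ((i : ℕ) - (d - 1)))) else 0)

section pabsLemmas
variable {Fq : Type} [Field Fq] {q : ℕ}

lemma pabs_nonneg (q : ℕ) (x : Polynomial Fq) : 0 ≤ pabs q x := by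
  unfold pabs; split <;> positivity

lemma pabs_zero : pabs q (0 : Polynomial Fq) = 0 := by simp [pabs]

lemma pabs_neg (x : Polynomial Fq) : pabs q (-x) = pabs q x := by
  by_cases hx : x = 0
  · simp [pabs, hx]
  · unfold pabs
    rw [if_neg hx, if_neg (neg_ne_zero.mpr hx), Polynomial.natDegree_neg]

lemma pabs_one : pabs q (1 : Polynomial Fq) = 1 := by simp [pabs]

lemma pabs_mul (x y : Polynomial Fq) : pabs q (x * y) = pabs q x * pabs q y := by
  unfold pabs
  by_cases hx : x = 0
  · simp [hx]
  by_cases hy : y = 0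
  · simp [hy]
  rw [if_neg (mul_ne_zero hx hy), if_neg hx, if_neg hy, Polynomial.natDegree_mul hx hy,
    pow_add]

lemma pabs_prod {ι : Type*} (s : Finset ι) (f : ι → Polynomial Fq) :
    pabs q (∏ i ∈ s, f i) = ∏ i ∈ s, pabs q (f i) := by
  classical
  induction s using Finset.induction with
  | empty => simp [pabs_one]
  | @insert _ _ h ih => rw [Finset.prod_insert h, Finset.prod_insert h, pabs_mul, ih]

lemma pabs_add_le (hq : (1 : ℝ) ≤ q) (x y : Polynomial Fq) :
    pabs q (x + y) ≤ max (pabs q x) (pabs q y) := by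
  by_cases hxy : x + y = 0
  · have h0 : pabs q (x + y) = 0 := by simp [pabs, hxy]
    rw [h0]
    exact le_max_of_le_left (pabs_nonneg q x)
  by_cases hx : x = 0
  · simp [hx, le_max_right]
  by_cases hy : y = 0
  · simp [hy, le_max_left]
  have h := Polynomial.natDegree_add_le x y
  unfold pabs
  rw [if_neg hxy, if_neg hx, if_neg hy]
  rcases le_total x.natDegree y.natDegree with hxy' | hxy'
  · refine le_max_of_le_right (pow_le_pow_right₀ hq ?_)
    omega
  · refine le_max_of_le_left (pow_le_pow_right₀ hq ?_)
    omega

lemma pabs_sum_le (hq : (1 : ℝ) ≤ q) {ι : Type*} (s : Finset ι) (f : ι → Polynomial Fq)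
    {C : ℝ} (hC : 0 ≤ C) (h : ∀ i ∈ s, pabs q (f i) ≤ C) :
    pabs q (∑ i ∈ s, f i) ≤ C := by
  classical
  induction s using Finset.induction with
  | empty => simpa [pabs] using hC
  | @insert x s hx ih =>
    rw [Finset.sum_insert hx]
    exact le_trans (pabs_add_le hq _ _)
      (max_le (h _ (Finset.mem_insert_self _ _))
        (ih fun i hi => h i (Finset.mem_insert_of_mem hi)))

end pabsLemmas

/-- Lemma 3.4 (resultant bound): let `d, e ≥ 2` and `ℓ, A, B ∈ ℝ`.  If
`P(x) = a₀ + … + a_{e−1}x^{e−1}` and `Q(x) = b₀ + … + b_{d−1}x^{d−1}` in `𝔽_q[T][x]`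
satisfy `|a_j| ≤ q^{(e−j+A)ℓ}` for `0 ≤ j ≤ e−1` and `|b_j| ≤ q^{(d−j+B)ℓ}` for
`0 ≤ j ≤ d−1`, then `|Res(P,Q)| ≤ q^{((e+A)(d+B) − (A+1)(B+1))ℓ}`, where the resultant
is the determinant of the Sylvester matrix above. -/
theorem resultant_bound
    (q : ℕ) (Fq : Type) [Field Fq] [Fintype Fq] (hq : Fintype.card Fq = q)
    (d e : ℕ) (hd : 2 ≤ d) (he : 2 ≤ e) (L A B : ℝ)
    (a b : ℕ → Polynomial Fq)
    (ha : ∀ j : ℕ, j ≤ e - 1 →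
      pabs q (a j) ≤ (q : ℝ) ^ (((e : ℝ) - (j : ℝ) + A) * L))
    (hb : ∀ j : ℕ, j ≤ d - 1 →
      pabs q (b j) ≤ (q : ℝ) ^ (((d : ℝ) - (j : ℝ) + B) * L)) :
    pabs q (sylvester d e a b).det
      ≤ (q : ℝ) ^ ((((e : ℝ) + A) * ((d : ℝ) + B) - (A + 1) * (B + 1)) * L) := by
  classical
  have hq2 : 2 ≤ q := by
    rw [← hq]; exact Fintype.one_lt_card
  have hq1 : (1 : ℝ) ≤ (q : ℝ) := by exact_mod_cast (by omega : 1 ≤ q)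
  have hq0 : (0 : ℝ) < (q : ℝ) := lt_of_lt_of_le one_pos hq1
  rw [Matrix.det_apply]
  refine pabs_sum_le hq1 _ _ (Real.rpow_nonneg hq0.le _) ?_
  intro σ _
  have hsgn : pabs q (Equiv.Perm.sign σ • ∏ i, (sylvester d e a b) (σ i) i)
      = pabs q (∏ i, (sylvester d e a b) (σ i) i) := by
    rcases Int.units_eq_one_or (Equiv.Perm.sign σ) with h | h <;>
      rw [h] <;> simp [Units.smul_def, pabs_neg]
  rw [hsgn]
  -- per-column exponent
  set c : Fin (d + e - 2) → ℝ := fun i =>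
    if ((σ i : ℕ)) < d - 1 then (((i : ℕ) : ℝ) - ((σ i : ℕ) : ℝ) + 1 + A) * L
    else (((i : ℕ) : ℝ) - ((σ i : ℕ) : ℝ) + (d : ℝ) + B) * L with hc
  have hentry : ∀ i : Fin (d + e - 2), pabs q ((sylvester d e a b) (σ i) i) ≤ (q : ℝ) ^ (c i) := by
    intro i
    have hσlt : (σ i : ℕ) < d + e - 2 := (σ i).isLt
    have hilt : (i : ℕ) < d + e - 2 := i.isLt
    simp only [sylvester, Matrix.of_apply]
    by_cases h1 : ((σ i : ℕ)) < d - 1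
    · rw [if_pos h1]
      by_cases h2 : (σ i : ℕ) ≤ (i : ℕ) ∧ (i : ℕ) ≤ (σ i : ℕ) + (e - 1)
      · rw [if_pos h2]
        refine (ha _ (Nat.sub_le _ _)).trans (le_of_eq ?_)
        congr 1
        have hke : (i : ℕ) - (σ i : ℕ) ≤ e - 1 := by omega
        rw [hc]
        simp only [if_pos h1]
        rw [Nat.cast_sub hke, Nat.cast_sub h2.1, Nat.cast_sub (by omega : 1 ≤ e)]
        push_cast
        ring
      · rw [if_neg h2]
        exact pabs_zero.le.trans (Real.rpow_nonneg hq0.le _)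
    · rw [if_neg h1]
      by_cases h2 : (σ i : ℕ) - (d - 1) ≤ (i : ℕ) ∧ (i : ℕ) ≤ ((σ i : ℕ) - (d - 1)) + (d - 1)
      · rw [if_pos h2]
        refine (hb _ (Nat.sub_le _ _)).trans (le_of_eq ?_)
        congr 1
        have hσge : d - 1 ≤ (σ i : ℕ) := by omega
        have hkd : (i : ℕ) - ((σ i : ℕ) - (d - 1)) ≤ d - 1 := by omega
        rw [hc]
        simp only [if_neg h1]
        rw [Nat.cast_sub hkd, Nat.cast_sub h2.1, Nat.cast_sub hσge,
          Nat.cast_sub (by omega : 1 ≤ d)]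
        push_cast
        ring
      · rw [if_neg h2]
        exact pabs_zero.le.trans (Real.rpow_nonneg hq0.le _)
  calc pabs q (∏ i, (sylvester d e a b) (σ i) i)
      = ∏ i, pabs q ((sylvester d e a b) (σ i) i) := pabs_prod _ _
    _ ≤ ∏ i, (q : ℝ) ^ (c i) :=
        Finset.prod_le_prod (fun i _ => pabs_nonneg q _) (fun i _ => hentry i)
    _ = (q : ℝ) ^ (∑ i, c i) := (Real.rpow_sum_of_pos hq0 c Finset.univ).symm
    _ = (q : ℝ) ^ ((((e : ℝ) + A) * ((d : ℝ) + B) - (A + 1) * (B + 1)) * L) := by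
        congr 1
        -- compute the sum of exponents
        set g : ℕ → ℝ := fun r => if r < d - 1 then (1 + A) * L else ((d : ℝ) + B) * L
          with hg
        have hsplit : ∀ i : Fin (d + e - 2),
            c i = (((i : ℕ) : ℝ) * L - ((σ i : ℕ) : ℝ) * L) + g (σ i : ℕ) := by
          intro i
          rw [hc, hg]
          by_cases h1 : (σ i : ℕ) < d - 1 <;> simp only [if_pos, if_neg, h1, if_true,
            if_false] <;> ring
        rw [Finset.sum_congr rfl (fun i _ => hsplit i), Finset.sum_add_distrib,
          Finset.sum_sub_distrib]
        have hperm1 : ∑ i : Fin (d + e - 2), ((σ i : ℕ) : ℝ) * L = ∑ i : Fin (d + e - 2), ((i : ℕ) : ℝ) * L :=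
          Equiv.sum_comp σ (fun i => ((i : ℕ) : ℝ) * L)
        have hperm2 : ∑ i : Fin (d + e - 2), g (σ i : ℕ) = ∑ i : Fin (d + e - 2), g (i : ℕ) :=
          Equiv.sum_comp σ (fun i => g (i : ℕ))
        rw [hperm1, hperm2, sub_self, zero_add]
        have hgn : ∑ i : Fin (d + e - 2), g (i : ℕ) = ∑ i ∈ Finset.range (d + e - 2), g i :=
          Fin.sum_univ_eq_sum_range g (d + e - 2)
        rw [hgn]
        have hd1n : d - 1 ≤ d + e - 2 := by omega
        rw [← Finset.sum_range_add_sum_Ico _ hd1n]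
        have key1 : ∀ i ∈ Finset.range (d - 1), g i = (1 + A) * L := by
          intro i hi
          simp only [hg]
          exact if_pos (Finset.mem_range.mp hi)
        have key2 : ∀ i ∈ Finset.Ico (d - 1) (d + e - 2), g i = ((d : ℝ) + B) * L := by
          intro i hi
          simp only [hg]
          exact if_neg (by have := (Finset.mem_Ico.mp hi).1; omega)
        rw [Finset.sum_congr rfl key1, Finset.sum_congr rfl key2, Finset.sum_const,
          Finset.sum_const, Finset.card_range, Nat.card_Ico, nsmul_eq_mul, nsmul_eq_mul]
        have hcd : ((d - 1 : ℕ) : ℝ) = (d : ℝ) - 1 := by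
          rw [Nat.cast_sub (by omega : 1 ≤ d), Nat.cast_one]
        have hce : ((d + e - 2 - (d - 1) : ℕ) : ℝ) = (e : ℝ) - 1 := by
          rw [show d + e - 2 - (d - 1) = e - 1 by omega,
            Nat.cast_sub (by omega : 1 ≤ e), Nat.cast_one]
        rw [hcd, hce]
        ring
end

section
/- Let F ∈ 𝔽_q[T] be nonzero of degree r, and let a_1, …, a_d ∈ 𝔽_q[T] all be coprime to F. Let L = {(x_1, …, x_d) ∈ 𝔽_q[T]^d : a_1 x_1 + … + a_d x_d ≡ 0 (mod F)}. Then the dual lattice L* equals the set {(y_1/F, …, y_d/F) : y_1, …, y_d ∈ 𝔽_q[T] and there exists w ∈ 𝔽_q[T] with a_i·w ≡ y_i (mod F) for all 1 ≤ i ≤ d}. -/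
/-- The embedding `𝔽_q[T] → 𝔽_q(T)_∞ = 𝔽_q((1/T))`, sending `T` to the inverse of the
Laurent-series variable (`T ↦ X⁻¹`, i.e. `T` is the single term of order `−1`). -/
noncomputable def polyEmb (Fq : Type) [Field Fq] (p : Polynomial Fq) : LaurentSeries Fq :=
  Polynomial.aeval (HahnSeries.single (-1 : ℤ) (1 : Fq) : LaurentSeries Fq) p

lemma polyEmb_coeff (Fq : Type) [Field Fq] (p : Polynomial Fq) (n : ℕ) :
    (polyEmb Fq p).coeff (-(n : ℤ)) = p.coeff n := by
  induction p using Polynomial.induction_on' with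
  | add p q hp hq =>
    rw [polyEmb, map_add, Polynomial.coeff_add, HahnSeries.coeff_add, ← polyEmb, ← polyEmb, hp, hq]
  | monomial k c =>
    rw [polyEmb, Polynomial.aeval_monomial, HahnSeries.single_pow, one_pow]
    have halg : (algebraMap Fq (LaurentSeries Fq)) c = HahnSeries.single (0:ℤ) c := by
      rw [show (algebraMap Fq (LaurentSeries Fq)) c
          = HahnSeries.ofPowerSeries ℤ Fq (PowerSeries.C c) from rfl,
        HahnSeries.ofPowerSeries_C, HahnSeries.C_apply]
    rw [halg, HahnSeries.single_mul_single, zero_add, mul_one, Polynomial.coeff_monomial,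
      HahnSeries.coeff_single, nsmul_eq_mul, mul_neg_one]
    by_cases h : n = k
    · simp [h]
    · rw [if_neg (by exact_mod_cast fun hh => h (by omega)), if_neg fun hh => h hh.symm]

lemma polyEmb_injective (Fq : Type) [Field Fq] : Function.Injective (polyEmb Fq) := by
  intro p q h
  ext n
  rw [← polyEmb_coeff, ← polyEmb_coeff, h]

lemma polyEmb_mul (Fq : Type) [Field Fq] (p q : Polynomial Fq) :
    polyEmb Fq (p * q) = polyEmb Fq p * polyEmb Fq q :=
  map_mul (Polynomial.aeval _) p q

lemma polyEmb_sum (Fq : Type) [Field Fq] {ι : Type*} (s : Finset ι) (f : ι → Polynomial Fq) :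
    polyEmb Fq (∑ i ∈ s, f i) = ∑ i ∈ s, polyEmb Fq (f i) :=
  map_sum (Polynomial.aeval _) f s

lemma polyEmb_zero (Fq : Type) [Field Fq] : polyEmb Fq 0 = 0 :=
  map_zero (Polynomial.aeval _)


/-- Lemma 5.5 (dual of a modular lattice): let `F ≠ 0` have degree `r`, let
`a₁, …, a_d ∈ 𝔽_q[T]` all be coprime to `F`, and let
`L = {(x₁,…,x_d) ∈ 𝔽_q[T]^d : a₁x₁ + … + a_dx_d ≡ 0 (mod F)}` inside `𝔽_q(T)_∞^d`.
Then the dual lattice `L* = {x : ⟨x,y⟩ ∈ 𝔽_q[T] for all y ∈ L}` equals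
`{(y₁/F, …, y_d/F) : yᵢ ∈ 𝔽_q[T], ∃ w ∈ 𝔽_q[T], aᵢ·w ≡ yᵢ (mod F) for all i}`. -/
theorem dual_modular_lattice
    (q r d : ℕ) (Fq : Type) [Field Fq] [Fintype Fq] (hq : Fintype.card Fq = q)
    (hd : 0 < d)
    (F : Polynomial Fq) (hF : F ≠ 0) (hFdeg : F.natDegree = r)
    (a : Fin d → Polynomial Fq) (ha : ∀ i, IsCoprime (a i) F) :
    {x : Fin d → LaurentSeries Fq |
        ∀ y ∈ {y : Fin d → LaurentSeries Fq | ∃ p : Fin d → Polynomial Fq,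
            (∀ i, y i = polyEmb Fq (p i)) ∧ F ∣ ∑ i, a i * p i},
          (∑ i, x i * y i) ∈ Set.range (polyEmb Fq)}
      = {x : Fin d → LaurentSeries Fq | ∃ y : Fin d → Polynomial Fq, ∃ w : Polynomial Fq,
          (∀ i, x i = polyEmb Fq (y i) / polyEmb Fq F) ∧
          (∀ i, F ∣ (a i * w - y i))} := by
  have hinj := polyEmb_injective Fq
  have hF0 : polyEmb Fq F ≠ 0 := fun h => hF (hinj (h.trans (polyEmb_zero Fq).symm))
  ext x
  simp only [Set.mem_setOf_eq]
  constructor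
  · intro hx
    have key : ∀ p : Fin d → Polynomial Fq, F ∣ ∑ i, a i * p i →
        ∃ c, ∑ i, x i * polyEmb Fq (p i) = polyEmb Fq c := by
      intro p hp
      obtain ⟨c, hc⟩ := hx (fun i => polyEmb Fq (p i)) ⟨p, fun _ => rfl, hp⟩
      exact ⟨c, hc.symm⟩
    have h1 : ∀ i : Fin d, ∃ c, x i * polyEmb Fq F = polyEmb Fq c := by
      intro i
      obtain ⟨c, hc⟩ := key (Pi.single i F) (by
        rw [Finset.sum_eq_single i]
        · rw [Pi.single_eq_same]; exact Dvd.intro_left _ rfl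
        · intro j _ hj; rw [Pi.single_eq_of_ne hj, mul_zero]
        · intro h; exact absurd (Finset.mem_univ i) h)
      refine ⟨c, ?_⟩
      rw [← hc, Finset.sum_eq_single i]
      · rw [Pi.single_eq_same]
      · intro j _ hj; rw [Pi.single_eq_of_ne hj, polyEmb_zero, mul_zero]
      · intro h; exact absurd (Finset.mem_univ i) h
    choose y hy using h1
    have hxv : ∀ i, x i = polyEmb Fq (y i) / polyEmb Fq F := by
      intro i
      rw [eq_div_iff hF0]
      exact hy i
    set i0 : Fin d := ⟨0, hd⟩
    have pair : ∀ i, F ∣ (a i * y i0 - a i0 * y i) := by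
      intro i
      set p : Fin d → Polynomial Fq := Pi.single i0 (a i) - Pi.single i (a i0) with hpdef
      have hsp : ∀ z : Fin d → Polynomial Fq,
          ∑ j, z j * p j = z i0 * a i - z i * a i0 := by
        intro z
        have : ∀ j, z j * p j = z j * (Pi.single i0 (a i) : Fin d → Polynomial Fq) j
            - z j * (Pi.single i (a i0) : Fin d → Polynomial Fq) j := by
          intro j; rw [hpdef]; simp [mul_sub]
        rw [Finset.sum_congr rfl fun j _ => this j, Finset.sum_sub_distrib]
        congr 1
        · rw [Finset.sum_eq_single i0]
          · rw [Pi.single_eq_same]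
          · intro j _ hj; rw [Pi.single_eq_of_ne hj, mul_zero]
          · intro h; exact absurd (Finset.mem_univ i0) h
        · rw [Finset.sum_eq_single i]
          · rw [Pi.single_eq_same]
          · intro j _ hj; rw [Pi.single_eq_of_ne hj, mul_zero]
          · intro h; exact absurd (Finset.mem_univ i) h
      have hdvd : F ∣ ∑ j, a j * p j := by
        rw [hsp a, mul_comm (a i0) (a i), sub_self]
        exact dvd_zero F
      obtain ⟨c, hc⟩ := key p hdvd
      have hc2 : polyEmb Fq (∑ j, y j * p j) / polyEmb Fq F = polyEmb Fq c := by
        rw [← hc, polyEmb_sum, Finset.sum_div]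
        refine Finset.sum_congr rfl fun j _ => ?_
        rw [hxv j, polyEmb_mul, div_mul_eq_mul_div]
      have hc3 : ∑ j, y j * p j = c * F := by
        apply hinj
        rw [polyEmb_mul]
        rw [div_eq_iff hF0] at hc2
        exact hc2
      have : F ∣ ∑ j, y j * p j := hc3 ▸ Dvd.intro_left c rfl
      rw [hsp y] at this
      have heq : a i * y i0 - a i0 * y i = y i0 * a i - y i * a i0 := by ring
      rw [heq]
      exact this
    obtain ⟨b, u, hbu⟩ := ha i0
    refine ⟨y, b * y i0, hxv, fun i => ?_⟩
    have h2 : F ∣ a i0 * (a i * (b * y i0) - y i) := by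
      have hid : a i0 * (a i * (b * y i0) - y i)
          = (a i * y i0 - a i0 * y i) - F * (u * (a i * y i0)) := by
        linear_combination (a i * y i0) * hbu
      rw [hid]
      exact dvd_sub (pair i) (Dvd.intro _ rfl)
    exact ((ha i0).symm).dvd_of_dvd_mul_left h2
  · rintro ⟨y, w, hxv, hdvd⟩ Y ⟨p, hY, hp⟩
    have hs : F ∣ ∑ i, y i * p i := by
      have h3 : ∑ i, y i * p i
          = w * ∑ i, a i * p i - ∑ i, (a i * w - y i) * p i := by
        rw [Finset.mul_sum, ← Finset.sum_sub_distrib]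
        exact Finset.sum_congr rfl fun i _ => by ring
      rw [h3]
      exact dvd_sub (hp.mul_left w) (Finset.dvd_sum fun i _ => (hdvd i).mul_right _)
    obtain ⟨c, hc⟩ := hs
    refine ⟨c, ?_⟩
    have hsum : ∑ i, x i * Y i = polyEmb Fq (∑ i, y i * p i) / polyEmb Fq F := by
      rw [polyEmb_sum, Finset.sum_div]
      refine Finset.sum_congr rfl fun i _ => ?_
      rw [hY i, hxv i, polyEmb_mul, div_mul_eq_mul_div]
    rw [hsum, hc, polyEmb_mul, mul_comm, mul_div_assoc, div_self hF0, mul_one]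
end

section
/- Fix a positive integer d and ε > 0. Then there exists a constant C = C(q,d,ε) such that the following holds: for every F ∈ 𝔽_q[T] of degree r, every polynomial Q ∈ 𝔽_q[T][x] of degree d in x whose leading coefficient is coprime to F, and every positive integer m with m < r·(1/d − ε), the number of x ∈ 𝔽_q[T] with deg x < m and Q(x) ≡ 0 (mod F) is at most C. -/
open Polynomial Finset

namespace CopAux

variable {Fq : Type} [Field Fq]


variable {Fq : Type} [Field Fq]

noncomputable def g (F : Polynomial Fq) (Q1 : Polynomial (Polynomial Fq)) (d k p : ℕ) :
    Polynomial (Polynomial Fq) :=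
  X ^ (p % d) * Q1 ^ (p / d) * C (F ^ (k - p / d))

noncomputable def red (F : Polynomial Fq) (Q1 : Polynomial (Polynomial Fq)) (d k : ℕ) :
    ℕ → Polynomial (Polynomial Fq) → Polynomial (Polynomial Fq)
  | 0, H => H
  | (p+1), H => red F Q1 d k p (H - C (H.coeff p /ₘ F ^ (k - p / d)) * g F Q1 d k p)

variable {F : Polynomial Fq} {Q1 : Polynomial (Polynomial Fq)} {d k : ℕ}

lemma monic_XQ (hQ : Q1.Monic) (d p : ℕ) : (X ^ (p % d) * Q1 ^ (p / d)).Monic :=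
  (monic_X_pow _).mul (hQ.pow _)

lemma natDegree_XQ' (hQ : Q1.Monic) (hQd : Q1.natDegree = d) (p : ℕ) :
    (X ^ (p % d) * Q1 ^ (p / d)).natDegree = p := by
  rw [(monic_X_pow _).natDegree_mul (hQ.pow _), natDegree_X_pow, natDegree_pow, hQd,
    Nat.mod_add_div']

lemma coeff_g_self (hQ : Q1.Monic) (hQd : Q1.natDegree = d) (p : ℕ) :
    (g F Q1 d k p).coeff p = F ^ (k - p / d) := by
  rw [g, coeff_mul_C]
  have h1 : (X ^ (p % d) * Q1 ^ (p / d)).coeff p = 1 := by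
    have h := (monic_XQ hQ d p).coeff_natDegree
    rwa [natDegree_XQ' hQ hQd] at h
  rw [h1, one_mul]

lemma coeff_g_of_lt (hQ : Q1.Monic) (hQd : Q1.natDegree = d) {p p' : ℕ} (h : p < p') :
    (g F Q1 d k p).coeff p' = 0 := by
  rw [g, coeff_mul_C]
  rw [coeff_eq_zero_of_natDegree_lt (by rw [natDegree_XQ' hQ hQd]; exact h), zero_mul]

lemma eval_g_dvd {x : Polynomial Fq} (hdvd : F ∣ Q1.eval x) {p : ℕ} (hp : p / d ≤ k) :
    F ^ k ∣ (g F Q1 d k p).eval x := by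
  rw [g, eval_mul, eval_mul, eval_C, eval_pow, eval_pow, eval_X]
  have h1 : F ^ (p / d) ∣ (Q1.eval x) ^ (p / d) := pow_dvd_pow_of_dvd hdvd _
  have h2 : F ^ k = F ^ (p / d) * F ^ (k - p / d) := by
    rw [← pow_add, Nat.add_sub_cancel' hp]
  rw [h2]
  exact mul_dvd_mul (Dvd.dvd.mul_left h1 _) dvd_rfl

lemma red_coeff_high : ∀ (p : ℕ) (H : Polynomial (Polynomial Fq)) (p' : ℕ), p ≤ p' →
    Q1.Monic → Q1.natDegree = d → (red F Q1 d k p H).coeff p' = H.coeff p'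
  | 0, H, p', _, _, _ => rfl
  | (p+1), H, p', hp, hQ, hQd => by
    rw [red, red_coeff_high p _ p' (le_trans (Nat.le_succ p) hp) hQ hQd]
    rw [coeff_sub, coeff_C_mul, coeff_g_of_lt hQ hQd (lt_of_lt_of_le (Nat.lt_succ_self p) hp),
      mul_zero, sub_zero]

lemma degree_F_pow (hF : F.Monic) (e : ℕ) :
    (F ^ e).degree = ((e * F.natDegree : ℕ) : WithBot ℕ) := by
  rw [degree_eq_natDegree (hF.pow e).ne_zero, natDegree_pow]

lemma red_coeff_small (hF : F.Monic) (hQ : Q1.Monic) (hQd : Q1.natDegree = d) :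
    ∀ (p : ℕ) (H : Polynomial (Polynomial Fq)) (p' : ℕ), p' < p →
    ((red F Q1 d k p H).coeff p').degree < (((k - p' / d) * F.natDegree : ℕ) : WithBot ℕ)
  | 0, _, p', hp => absurd hp (Nat.not_lt_zero _)
  | (p+1), H, p', hp => by
    rcases Nat.lt_or_ge p' p with h | h
    · exact red_coeff_small hF hQ hQd p _ p' h
    · have hp'p : p' = p := le_antisymm (Nat.lt_succ_iff.mp hp) h
      subst hp'p
      rw [red, red_coeff_high p' _ p' le_rfl hQ hQd]
      rw [coeff_sub, coeff_C_mul, coeff_g_self hQ hQd, mul_comm,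
        ← modByMonic_eq_sub_mul_div _ _]
      rw [← degree_F_pow (F := F) hF (k - p' / d)]
      exact degree_modByMonic_lt _ (hF.pow _)

lemma red_eval_dvd (hF : F.Monic) (hQ : Q1.Monic) (hQd : Q1.natDegree = d) {x : Polynomial Fq}
    (hdvd : F ∣ Q1.eval x) :
    ∀ (p : ℕ), p ≤ d * (k + 1) → ∀ (H : Polynomial (Polynomial Fq)), 0 < d →
    F ^ k ∣ H.eval x - (red F Q1 d k p H).eval x
  | 0, _, H, _ => by simp [red]
  | (p+1), hpn, H, hd => by
    rw [red]
    have hjk : p / d ≤ k := by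
      have h0 : p < d * (k+1) := hpn
      exact Nat.lt_succ_iff.mp ((Nat.div_lt_iff_lt_mul hd).mpr (by rw [Nat.mul_comm]; exact h0))
    have h1 := red_eval_dvd hF hQ hQd hdvd p (le_trans (Nat.le_succ p) hpn)
      (H - C (H.coeff p /ₘ F ^ (k - p / d)) * g F Q1 d k p) hd
    have h2 : F ^ k ∣ (C (H.coeff p /ₘ F ^ (k - p / d)) * g F Q1 d k p).eval x := by
      rw [eval_mul, eval_C]
      exact Dvd.dvd.mul_left (eval_g_dvd hdvd hjk) _
    have h3 : H.eval x - (red F Q1 d k p (H - C (H.coeff p /ₘ F ^ (k - p / d)) * g F Q1 d k p)).eval x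
        = (C (H.coeff p /ₘ F ^ (k - p / d)) * g F Q1 d k p).eval x
          + ((H - C (H.coeff p /ₘ F ^ (k - p / d)) * g F Q1 d k p).eval x
            - (red F Q1 d k p (H - C (H.coeff p /ₘ F ^ (k - p / d)) * g F Q1 d k p)).eval x) := by
      rw [eval_sub]; ring
    rw [h3]
    exact dvd_add h2 h1



lemma sum_range_mul_div (d : ℕ) (hd : 0 < d) (f : ℕ → ℕ) :
    ∀ s : ℕ, ∑ p ∈ range (d * s), f (p / d) = d * ∑ j ∈ range s, f j
  | 0 => by simp
  | (s+1) => by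
    rw [Nat.mul_succ, Finset.sum_range_add, sum_range_mul_div d hd f s]
    have h1 : ∀ i ∈ range d, f ((d * s + i) / d) = f s := by
      intro i hi
      rw [Nat.mul_add_div hd, Nat.div_eq_of_lt (mem_range.mp hi), Nat.add_zero]
    rw [Finset.sum_congr rfl h1, Finset.sum_const, Finset.card_range, Finset.sum_range_succ,
      Nat.mul_add, smul_eq_mul]

lemma sums_lt {d k m r : ℕ} (hd : 0 < d) (hm : 0 < m) (h : m * (d * (k + 1)) < r * k) :
    ∑ p ∈ range (d * (k + 1)), (k - p / d) * r < ∑ p ∈ range (d * (k + 1)), (r * k - p * m) := by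
  set n := d * (k + 1) with hn
  have hk : 0 < k := by
    rcases Nat.eq_zero_or_pos k with hk0 | hk0
    · subst hk0; simp at h
    · exact hk0
  have hn2 : 2 ≤ n := by
    calc 2 = 1 * (1 + 1) := by norm_num
    _ ≤ d * (k + 1) := Nat.mul_le_mul hd (by omega)
  have hpm : ∀ p ∈ range n, p * m < r * k := by
    intro p hp
    have hp' : p < n := mem_range.mp hp
    calc p * m ≤ (n - 1) * m := Nat.mul_le_mul_right m (by omega)
    _ < n * m := by
        apply Nat.mul_lt_mul_of_lt_of_le (by omega) le_rfl hm
    _ = m * n := Nat.mul_comm _ _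
    _ < r * k := h
  -- sum of B
  have hB : (∑ p ∈ range n, (r * k - p * m)) + (∑ p ∈ range n, p) * m = n * (r * k) := by
    rw [Finset.sum_mul, ← Finset.sum_add_distrib]
    rw [Finset.sum_congr rfl (fun p hp => Nat.sub_add_cancel (le_of_lt (hpm p hp)))]
    rw [Finset.sum_const, Finset.card_range, smul_eq_mul]
  -- sum of e
  have hE : ∑ p ∈ range n, (k - p / d) * r = d * ((∑ j ∈ range (k + 1), j) * r) := by
    rw [hn, sum_range_mul_div d hd (fun j => (k - j) * r)]
    congr 1
    rw [← Finset.sum_mul]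
    congr 1
    have := Finset.sum_range_reflect (fun j => j) (k + 1)
    simpa using this
  have gauss1 : (∑ j ∈ range (k + 1), j) * 2 = (k + 1) * k := Finset.sum_range_id_mul_two (k + 1)
  have gauss2 : (∑ p ∈ range n, p) * 2 = n * (n - 1) := Finset.sum_range_id_mul_two n
  -- final nonlinear equation
  have key : m * n * (n - 1) < n * (r * k) := by
    calc m * n * (n - 1) < r * k * (n - 1) :=
          Nat.mul_lt_mul_of_lt_of_le h le_rfl (by omega)
    _ ≤ r * k * n := Nat.mul_le_mul_left _ (by omega)
    _ = n * (r * k) := Nat.mul_comm _ _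
  -- combine: 2*LHS = d*((k+1)*k)*r = n*(k*r); want 2*LHS < 2*RHS
  have hE2 : (∑ p ∈ range n, (k - p / d) * r) * 2 = n * (r * k) := by
    rw [hE]
    calc d * ((∑ j ∈ range (k + 1), j) * r) * 2
        = d * (((∑ j ∈ range (k + 1), j) * 2) * r) := by ring
    _ = d * ((k + 1) * k * r) := by rw [gauss1]
    _ = n * (r * k) := by rw [hn]; ring
  have hB2 : (∑ p ∈ range n, (r * k - p * m)) * 2 = 2 * (n * (r * k)) - m * (n * (n-1)) := by
    have h1 : (∑ p ∈ range n, p) * m * 2 = m * (n * (n - 1)) := by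
      calc (∑ p ∈ range n, p) * m * 2 = ((∑ p ∈ range n, p) * 2) * m := by ring
      _ = n * (n-1) * m := by rw [gauss2]
      _ = m * (n * (n-1)) := by ring
    omega
  have hle : m * (n * (n - 1)) ≤ 2 * (n * (r * k)) := by
    have := key
    nlinarith [key]
  -- conclude
  have : (∑ p ∈ range n, (k - p / d) * r) * 2 < (∑ p ∈ range n, (r * k - p * m)) * 2 := by
    rw [hE2, hB2]
    have : m * (n * (n-1)) = m * n * (n-1) := by ring
    omega
  omega

lemma exists_H [Fintype Fq] {d k m : ℕ} (hd : 0 < d) (hm : 0 < m)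
    (F : Polynomial Fq) (hF : F.Monic)
    (Q1 : Polynomial (Polynomial Fq)) (hQ : Q1.Monic) (hQd : Q1.natDegree = d)
    (hmn : m * (d * (k + 1)) < F.natDegree * k) :
    ∃ H : Polynomial (Polynomial Fq), H ≠ 0 ∧ H.natDegree < d * (k + 1) ∧
      ∀ x : Polynomial Fq, x.degree < (m : WithBot ℕ) → F ∣ Q1.eval x → H.eval x = 0 := by
  classical
  set n := d * (k + 1) with hn
  set r := F.natDegree with hr
  set B : ℕ → ℕ := fun p => r * k - p * m with hB
  set E : ℕ → ℕ := fun p => (k - p / d) * r with hE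
  have hn0 : 0 < n := Nat.mul_pos hd (Nat.succ_pos k)
  have hq1 : 1 < Fintype.card Fq := Fintype.one_lt_card
  letI fintypeDLT : ∀ s : ℕ, Fintype (degreeLT Fq s) :=
    fun s => Fintype.ofEquiv _ (degreeLTEquiv Fq s).toEquiv.symm
  have cardDLT : ∀ s : ℕ, Fintype.card (degreeLT Fq s) = Fintype.card Fq ^ s := by
    intro s
    rw [Fintype.card_congr (degreeLTEquiv Fq s).toEquiv, Fintype.card_fun, Fintype.card_fin]
  -- the "box" map
  set Ha : ((p : Fin n) → degreeLT Fq (B p)) → Polynomial (Polynomial Fq) :=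
    fun a => ∑ p : Fin n, C ((a p : Polynomial Fq)) * X ^ (p : ℕ) with hHa
  have coeff_Ha_lt : ∀ a (t : ℕ) (h : t < n), (Ha a).coeff t = ((a ⟨t, h⟩ : Polynomial Fq)) := by
    intro a t h
    rw [hHa, finset_sum_coeff]
    rw [Finset.sum_eq_single (⟨t, h⟩ : Fin n)]
    · rw [coeff_C_mul, coeff_X_pow, if_pos rfl, mul_one]
    · intro b _ hb
      rw [coeff_C_mul, coeff_X_pow, if_neg, mul_zero]
      intro heq
      exact hb (Fin.ext heq.symm)
    · intro hmem; exact absurd (Finset.mem_univ _) hmem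
  have coeff_Ha_ge : ∀ a (t : ℕ), n ≤ t → (Ha a).coeff t = 0 := by
    intro a t h
    rw [hHa, finset_sum_coeff]
    apply Finset.sum_eq_zero
    intro b _
    rw [coeff_C_mul, coeff_X_pow, if_neg, mul_zero]
    intro heq
    exact absurd (heq ▸ b.isLt) (Nat.not_lt.mpr h)
  -- pigeonhole
  set Φ : ((p : Fin n) → degreeLT Fq (B p)) → ((p : Fin n) → degreeLT Fq (E p)) :=
    fun a p => ⟨(red F Q1 d k n (Ha a)).coeff p,
      mem_degreeLT.mpr (red_coeff_small hF hQ hQd n (Ha a) p p.isLt)⟩ with hPhi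
  have hcard : Fintype.card ((p : Fin n) → degreeLT Fq (E p))
      < Fintype.card ((p : Fin n) → degreeLT Fq (B p)) := by
    rw [Fintype.card_pi, Fintype.card_pi]
    have h1 : ∀ (G : ℕ → ℕ), ∏ p : Fin n, Fintype.card (degreeLT Fq (G p))
        = Fintype.card Fq ^ ∑ p ∈ range n, G p := by
      intro G
      simp only [cardDLT]
      rw [Finset.prod_pow_eq_pow_sum, Fin.sum_univ_eq_sum_range]
    rw [h1 B, h1 E]
    exact Nat.pow_lt_pow_right hq1 (sums_lt hd hm hmn)
  obtain ⟨a, b, hab, hPhiEq⟩ := Fintype.exists_ne_map_eq_of_card_lt Φ hcard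
  -- the reductions agree as polynomials
  have hred : red F Q1 d k n (Ha a) = red F Q1 d k n (Ha b) := by
    apply Polynomial.ext
    intro t
    rcases Nat.lt_or_ge t n with h | h
    · have := congrFun hPhiEq ⟨t, h⟩
      simpa [hPhi, Subtype.ext_iff] using this
    · rw [red_coeff_high n _ t h hQ hQd, red_coeff_high n _ t h hQ hQd,
        coeff_Ha_ge a t h, coeff_Ha_ge b t h]
  refine ⟨Ha a - Ha b, ?_, ?_, ?_⟩
  · -- nonzero
    intro h0
    apply hab
    funext p
    have := sub_eq_zero.mp h0
    apply Subtype.ext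
    have h1 := coeff_Ha_lt a p p.isLt
    have h2 := coeff_Ha_lt b p p.isLt
    rw [← Fin.eta p p.isLt, ← h1, ← h2, this]
  · -- natDegree < n
    have hdeg : (Ha a - Ha b).degree < (n : WithBot ℕ) := by
      rw [degree_lt_iff_coeff_zero]
      intro t ht
      rw [coeff_sub, coeff_Ha_ge a t ht, coeff_Ha_ge b t ht, sub_zero]
    rcases eq_or_ne (Ha a - Ha b) 0 with h0 | h0
    · rw [h0]; simpa using hn0
    · exact (natDegree_lt_iff_degree_lt h0).mpr hdeg
  · -- evaluation
    intro x hx hdvdQ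
    have hdvd : F ^ k ∣ (Ha a - Ha b).eval x := by
      have h1 := red_eval_dvd hF hQ hQd hdvdQ n le_rfl (Ha a) hd
      have h2 := red_eval_dvd hF hQ hQd hdvdQ n le_rfl (Ha b) hd
      have h3 : (Ha a - Ha b).eval x
          = ((Ha a).eval x - (red F Q1 d k n (Ha a)).eval x)
            - ((Ha b).eval x - (red F Q1 d k n (Ha b)).eval x) := by
        rw [hred, eval_sub]; ring
      rw [h3]
      exact dvd_sub h1 h2
    -- degree bound on the evaluation
    have hndeg : (Ha a - Ha b).natDegree < n := by
      have hdeg : (Ha a - Ha b).degree < (n : WithBot ℕ) := by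
        rw [degree_lt_iff_coeff_zero]
        intro t ht
        rw [coeff_sub, coeff_Ha_ge a t ht, coeff_Ha_ge b t ht, sub_zero]
      rcases eq_or_ne (Ha a - Ha b) 0 with h0 | h0
      · rw [h0]; simpa using hn0
      · exact (natDegree_lt_iff_degree_lt h0).mpr hdeg
    have hevdeg : ((Ha a - Ha b).eval x).degree < ((r * k : ℕ) : WithBot ℕ) := by
      rw [eval_eq_sum_range' hndeg]
      apply lt_of_le_of_lt (degree_sum_le _ _)
      rw [Finset.sup_lt_iff (WithBot.bot_lt_coe _)]
      intro t ht
      have htn : t < n := mem_range.mp ht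
      have htm : t * m < r * k := by
        calc t * m ≤ (n - 1) * m := Nat.mul_le_mul_right m (by omega)
        _ < n * m := Nat.mul_lt_mul_of_lt_of_le (by omega) le_rfl hm
        _ = m * n := Nat.mul_comm _ _
        _ < r * k := hmn
      rcases eq_or_ne ((Ha a - Ha b).coeff t) 0 with hc0 | hc0
      · rw [hc0, zero_mul, degree_zero]; exact WithBot.bot_lt_coe _
      rcases eq_or_ne x 0 with hx0 | hx0
      · subst hx0
        rcases Nat.eq_zero_or_pos t with ht0 | ht0
        · subst ht0
          rw [pow_zero, mul_one]
          have hcB : ((Ha a - Ha b).coeff 0).degree < ((B 0 : ℕ) : WithBot ℕ) := by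
            rw [coeff_sub]
            have hma := (sub_mem (a ⟨0, by omega⟩).2 (b ⟨0, by omega⟩).2 :
              ((a ⟨0, by omega⟩ : Polynomial Fq) - (b ⟨0, by omega⟩ : Polynomial Fq)) ∈ degreeLT Fq (B 0))
            rw [coeff_Ha_lt a 0 (by omega), coeff_Ha_lt b 0 (by omega)]
            exact mem_degreeLT.mp hma
          simpa [hB] using hcB
        · rw [zero_pow (by omega), mul_zero, degree_zero]; exact WithBot.bot_lt_coe _
      · -- main case
        have hcB : ((Ha a - Ha b).coeff t).degree < ((B t : ℕ) : WithBot ℕ) := by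
          rw [coeff_sub]
          have hma := (sub_mem (a ⟨t, htn⟩).2 (b ⟨t, htn⟩).2 :
            ((a ⟨t, htn⟩ : Polynomial Fq) - (b ⟨t, htn⟩ : Polynomial Fq)) ∈ degreeLT Fq (B t))
          rw [coeff_Ha_lt a t htn, coeff_Ha_lt b t htn]
          exact mem_degreeLT.mp hma
        have hcnd : ((Ha a - Ha b).coeff t).natDegree < B t :=
          (natDegree_lt_iff_degree_lt hc0).mpr hcB
        have hxnd : x.natDegree < m := (natDegree_lt_iff_degree_lt hx0).mpr hx
        have hxt : x ^ t ≠ 0 := pow_ne_zero _ hx0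
        rw [degree_eq_natDegree (mul_ne_zero hc0 hxt), natDegree_mul hc0 hxt, natDegree_pow]
        rw [Nat.cast_lt]
        have h4 : t * x.natDegree + t ≤ t * m := by
          calc t * x.natDegree + t = t * (x.natDegree + 1) := by ring
          _ ≤ t * m := Nat.mul_le_mul_left t hxnd
        have h5 : B t = r * k - t * m := rfl
        omega
    -- conclude eval = 0
    by_contra hne0
    have := degree_le_of_dvd hdvd hne0
    rw [degree_F_pow hF k] at this
    rw [Nat.mul_comm k r] at this
    exact absurd (lt_of_le_of_lt this hevdeg) (lt_irrefl _)


end CopAux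

/-- Lemma 7.2 (function-field Coppersmith bound): for a fixed positive integer `d` and
`ε > 0` there is a constant `C = C(q,d,ε)` such that for every `F ∈ 𝔽_q[T]` of degree
`r`, every `Q ∈ 𝔽_q[T][x]` of degree `d` in `x` whose leading coefficient is coprime to
`F`, and every positive integer `m < r(1/d − ε)`, the number of `x ∈ 𝔽_q[T]` with
`deg x < m` and `Q(x) ≡ 0 (mod F)` is at most `C`. -/
theorem coppersmith_root_count
    (q d : ℕ) (Fq : Type) [Field Fq] [Fintype Fq] (hq : Fintype.card Fq = q)
    (hd : 0 < d) (ε : ℝ) (hε : 0 < ε) :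
    ∃ C : ℝ, 0 < C ∧
      ∀ (F : Polynomial Fq) (r : ℕ), F.degree = (r : WithBot ℕ) →
      ∀ Q : Polynomial (Polynomial Fq), Q.natDegree = d → IsCoprime Q.leadingCoeff F →
      ∀ m : ℕ, 0 < m → (m : ℝ) < (r : ℝ) * (1 / (d : ℝ) - ε) →
      (Set.ncard {x : Polynomial Fq |
          x.degree < (m : WithBot ℕ) ∧ F ∣ Q.eval x} : ℝ) ≤ C := by
  classical
  set k : ℕ := max 1 ⌈1 / ((d : ℝ) * ε)⌉₊ with hk
  refine ⟨(d * (k + 1) : ℕ), by positivity, ?_⟩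
  intro F r hFdeg Q hQd hcop m hm hmr
  -- basic facts
  have hdR : (0 : ℝ) < d := by exact_mod_cast hd
  have hF0 : F ≠ 0 := fun h => by simp [h] at hFdeg
  have hlc0 : F.leadingCoeff ≠ 0 := leadingCoeff_ne_zero.mpr hF0
  have hu : IsUnit (C F.leadingCoeff⁻¹ : Polynomial Fq) :=
    isUnit_C.mpr (IsUnit.mk0 _ (inv_ne_zero hlc0))
  set F' : Polynomial Fq := F * C F.leadingCoeff⁻¹ with hF'
  have hF'monic : F'.Monic := monic_mul_leadingCoeff_inv hF0
  have hF'deg : F'.natDegree = r := by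
    apply natDegree_eq_of_degree_eq_some
    rw [hF', degree_mul_leadingCoeff_inv F hF0, hFdeg]
  have hdvd_iff : ∀ z : Polynomial Fq, F ∣ z ↔ F' ∣ z := by
    intro z
    rw [hF', IsUnit.mul_right_dvd hu]
  -- coprimality and Bezout
  have hcop' : IsCoprime Q.leadingCoeff F' := by
    apply hcop.mul_right
    obtain ⟨w, hw⟩ := hu.exists_right_inv
    exact ⟨0, w, by rw [zero_mul, zero_add, mul_comm, hw]⟩
  obtain ⟨u, v, huv⟩ := hcop'
  -- the monic model Q1
  set Q1 : Polynomial (Polynomial Fq) := C u * Q + C (v * F') * X ^ d with hQ1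
  have hQ1coeff : Q1.coeff d = 1 := by
    rw [hQ1, coeff_add, coeff_C_mul, coeff_C_mul, coeff_X_pow, if_pos rfl, mul_one]
    rw [← hQd, coeff_natDegree]
    exact huv
  have hQ1ndle : Q1.natDegree ≤ d := by
    apply le_trans (natDegree_add_le _ _)
    apply max_le
    · exact le_trans (natDegree_C_mul_le _ _) (le_of_eq hQd)
    · exact le_trans (natDegree_C_mul_le _ _) (le_of_eq (natDegree_X_pow d))
  have hQ1monic : Q1.Monic := monic_of_natDegree_le_of_coeff_eq_one d hQ1ndle hQ1coeff
  have hQ1deg : Q1.natDegree = d :=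
    le_antisymm hQ1ndle (le_natDegree_of_ne_zero (hQ1coeff ▸ one_ne_zero))
  have heval : ∀ x : Polynomial Fq, F ∣ Q.eval x → F' ∣ Q1.eval x := by
    intro x hx
    rw [hQ1, eval_add, eval_mul, eval_mul, eval_C, eval_C, eval_pow, eval_X]
    exact dvd_add (Dvd.dvd.mul_left ((hdvd_iff _).mp hx) u)
      (Dvd.dvd.mul_right (Dvd.dvd.mul_left dvd_rfl v) _)
  -- the numeric inequality
  have hk1 : 1 ≤ k := le_max_left _ _
  have hkceil : 1 / ((d : ℝ) * ε) ≤ (k : ℝ) := by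
    apply le_trans (Nat.le_ceil _)
    exact_mod_cast le_max_right 1 ⌈1 / ((d : ℝ) * ε)⌉₊
  have hdε : (0 : ℝ) < (d : ℝ) * ε := by positivity
  have hdεk : 1 ≤ (d : ℝ) * ε * (k + 1) := by
    have h1 : 1 ≤ (d : ℝ) * ε * k := by
      have h2 := (div_le_iff₀ hdε).mp hkceil
      calc (1 : ℝ) ≤ (k : ℝ) * ((d : ℝ) * ε) := h2
      _ = (d : ℝ) * ε * k := mul_comm _ _
    nlinarith
  have hmn : m * (d * (k + 1)) < r * k := by
    have hreal : (m : ℝ) * (d * (k + 1)) < (r : ℝ) * k := by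
      have h1 : (m : ℝ) * (d * (k + 1)) < ((r : ℝ) * (1 / d - ε)) * (d * (k + 1)) := by
        apply mul_lt_mul_of_pos_right hmr (by positivity)
      have h2 : ((r : ℝ) * (1 / d - ε)) * (d * (k + 1)) = (r : ℝ) * ((k + 1) - d * ε * (k + 1)) := by
        field_simp
      have h3 : (r : ℝ) * ((k + 1) - d * ε * (k + 1)) ≤ (r : ℝ) * k := by
        apply mul_le_mul_of_nonneg_left _ (Nat.cast_nonneg r)
        nlinarith
      calc (m : ℝ) * (d * (k + 1)) < _ := h1
      _ = _ := h2
      _ ≤ _ := h3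
    exact_mod_cast hreal
  rw [← hF'deg] at hmn
  -- apply the key construction
  obtain ⟨H, hH0, hHdeg, hHroot⟩ := CopAux.exists_H hd hm F' hF'monic Q1 hQ1monic hQ1deg hmn
  -- the root set is contained in the finite root set of H
  have hsub : {x : Polynomial Fq | x.degree < (m : WithBot ℕ) ∧ F ∣ Q.eval x}
      ⊆ (H.roots.toFinset : Set (Polynomial Fq)) := by
    intro x hx
    obtain ⟨hx1, hx2⟩ := hx
    simp only [Finset.coe_sort_coe, Multiset.mem_toFinset, Finset.mem_coe]
    rw [mem_roots']
    exact ⟨hH0, hHroot x hx1 (heval x hx2)⟩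
  have hcard : ({x : Polynomial Fq | x.degree < (m : WithBot ℕ) ∧ F ∣ Q.eval x}).ncard
      ≤ d * (k + 1) := by
    calc ({x : Polynomial Fq | x.degree < (m : WithBot ℕ) ∧ F ∣ Q.eval x}).ncard
        ≤ (H.roots.toFinset : Set (Polynomial Fq)).ncard :=
          Set.ncard_le_ncard hsub (H.roots.toFinset.finite_toSet)
    _ = H.roots.toFinset.card := Set.ncard_coe_finset _
    _ ≤ Multiset.card H.roots := Multiset.toFinset_card_le _
    _ ≤ H.natDegree := card_roots' H
    _ ≤ d * (k + 1) := le_of_lt hHdeg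
  exact_mod_cast hcard
end
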